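/- If ∑_{i=1}^n b_i/a_i < 1 (as rational numbers), then there exist positive integers r_1, …, r_n such that J is the principal ideal generated by the monomial ∏_{i=1}^n z_i^{r_i}, i.e. J = (∏_{i=1}^n z_i^{r_i}). -/
import Mathlib

open MvPolynomial Finsupp Pointwise

namespace Stmt3Aux

variable {n : ℕ}

/-- total degree of an exponent vector -/
def dsum {m : ℕ} (c : Fin m →₀ ℕ) : ℕ := ∑ j, c j

lemma degree_eq_dsum {m : ℕ} (c : Fin m →₀ ℕ) : Finsupp.degree c = dsum c :=
  (Finset.sum_subset (Finset.subset_univ _)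
    (fun _ _ hx => Finsupp.notMem_support_iff.mp hx))

lemma dsum_add {m : ℕ} (c e : Fin m →₀ ℕ) : dsum (c + e) = dsum c + dsum e := by
  simp [dsum, Finset.sum_add_distrib]

lemma dsum_single {m : ℕ} (j : Fin m) (k : ℕ) : dsum (Finsupp.single j k) = k := by
  simp [dsum, Finsupp.single_apply]

lemma le_dsum {m : ℕ} (c : Fin m →₀ ℕ) (j : Fin m) : c j ≤ dsum c :=
  Finset.single_le_sum (fun _ _ => Nat.zero_le _) (Finset.mem_univ j)

lemma dsum_eq_one {m : ℕ} {e : Fin m →₀ ℕ} (he : dsum e = 1) :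
    ∃ j, e = Finsupp.single j 1 := by
  have hne : e ≠ 0 := by
    rintro rfl; simp [dsum] at he
  obtain ⟨j, hj⟩ := Finsupp.ne_iff.mp hne
  simp only [Finsupp.coe_zero, Pi.zero_apply] at hj
  have hj1 : e j = 1 := le_antisymm (he ▸ le_dsum e j) (Nat.one_le_iff_ne_zero.mpr hj)
  refine ⟨j, ?_⟩
  ext k
  rcases eq_or_ne k j with rfl | hkj
  · simp [hj1]
  · rw [Finsupp.single_apply, if_neg (Ne.symm hkj)]
    by_contra hk
    have h2 : 2 ≤ dsum e := by
      have : ({j, k} : Finset (Fin m)).sum e ≤ dsum e :=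
        Finset.sum_le_sum_of_subset (Finset.subset_univ _)
      rw [Finset.sum_pair (Ne.symm hkj)] at this
      omega
    omega

/-- the exponent-vector map induced by substituting `u` -/
noncomputable def Amap (a b : Fin n → ℕ) (c : Fin (n + 1) →₀ ℕ) : Fin n →₀ ℕ :=
  Finsupp.equivFunOnFinite.symm fun i => a i * c i.castSucc + b i * c (Fin.last n)

@[simp] lemma Amap_apply (a b : Fin n → ℕ) (c : Fin (n + 1) →₀ ℕ) (i : Fin n) :
    Amap a b c i = a i * c i.castSucc + b i * c (Fin.last n) := rfl

lemma Amap_add (a b : Fin n → ℕ) (c e : Fin (n + 1) →₀ ℕ) :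
    Amap a b (c + e) = Amap a b c + Amap a b e := by
  ext i; simp [Amap_apply]; ring

-- key numeric lemma
lemma key_lt {a b : Fin n → ℕ} (hba : ∀ i, b i < a i)
    (hsum : (∑ i, (b i : ℚ) / (a i : ℚ)) < 1) {w : ℕ} (hw : 0 < w)
    (δ : Fin n → ℕ) (hδ : ∀ i, a i * δ i ≤ b i * w) : ∑ i, δ i < w := by
  have ha : ∀ i, (0 : ℚ) < a i := fun i =>
    Nat.cast_pos.mpr (lt_of_le_of_lt (Nat.zero_le _) (hba i))
  have h1 : ∀ i, (δ i : ℚ) ≤ (b i : ℚ) / a i * w := by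
    intro i
    rw [div_mul_eq_mul_div, le_div_iff₀ (ha i)]
    have h2 : ((a i * δ i : ℕ) : ℚ) ≤ ((b i * w : ℕ) : ℚ) := Nat.cast_le.mpr (hδ i)
    push_cast at h2
    linarith
  have h2 : (∑ i, (δ i : ℚ)) ≤ (∑ i, (b i : ℚ) / a i) * w := by
    rw [Finset.sum_mul]
    exact Finset.sum_le_sum fun i _ => h1 i
  have hw' : (0 : ℚ) < w := Nat.cast_pos.mpr hw
  have h3 : (∑ i, (δ i : ℚ)) < w := by nlinarith
  have h4 : ((∑ i, δ i : ℕ) : ℚ) < (w : ℚ) := by push_cast; exact h3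
  exact_mod_cast h4

lemma Amap_inj_aux {a b : Fin n → ℕ} (hba : ∀ i, b i < a i)
    (hsum : (∑ i, (b i : ℚ) / (a i : ℚ)) < 1) {c c' : Fin (n + 1) →₀ ℕ}
    (hd : dsum c = dsum c') (hA : Amap a b c = Amap a b c')
    (hle : c (Fin.last n) ≤ c' (Fin.last n)) : c = c' := by
  set w := c' (Fin.last n) - c (Fin.last n) with hw
  have hlast : c' (Fin.last n) = c (Fin.last n) + w := by omega
  have heq : ∀ i, a i * c i.castSucc = a i * c' i.castSucc + b i * w := by
    intro i
    have h0 := DFunLike.congr_fun hA i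
    rw [Amap_apply, Amap_apply, hlast, mul_add] at h0
    linarith
  have hge : ∀ i : Fin n, c' i.castSucc ≤ c i.castSucc := by
    intro i
    have h1 : a i * c' i.castSucc ≤ a i * c i.castSucc := by
      rw [heq i]; exact Nat.le_add_right _ _
    exact Nat.le_of_mul_le_mul_left h1 (lt_of_le_of_lt (Nat.zero_le _) (hba i))
  set δ : Fin n → ℕ := fun i => c i.castSucc - c' i.castSucc with hδdef
  have hδ : ∀ i : Fin n, a i * δ i = b i * w := by
    intro i
    have h1 : δ i + c' i.castSucc = c i.castSucc := by
      have := hge i; simp only [hδdef]; omega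
    have h2 : a i * (δ i + c' i.castSucc) = a i * c' i.castSucc + b i * w := by
      rw [h1]; exact heq i
    rw [mul_add] at h2
    linarith
  have hsums : (∑ i : Fin n, c i.castSucc) + c (Fin.last n) =
      (∑ i : Fin n, c' i.castSucc) + c' (Fin.last n) := by
    have hc : dsum c = (∑ i : Fin n, c i.castSucc) + c (Fin.last n) := by
      rw [dsum, Fin.sum_univ_castSucc]
    have hc' : dsum c' = (∑ i : Fin n, c' i.castSucc) + c' (Fin.last n) := by
      rw [dsum, Fin.sum_univ_castSucc]
    rw [← hc, ← hc', hd]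
  rcases Nat.eq_zero_or_pos w with h0 | hpos
  · have hδ0 : ∀ i : Fin n, δ i = 0 := by
      intro i
      have ha : 0 < a i := lt_of_le_of_lt (Nat.zero_le _) (hba i)
      have h2 := hδ i
      rw [h0, Nat.mul_zero] at h2
      rcases Nat.mul_eq_zero.mp h2 with h | h
      · omega
      · exact h
    have hcs : ∀ i : Fin n, c i.castSucc = c' i.castSucc := by
      intro i
      have h1 := hδ0 i
      have := hge i
      simp only [hδdef] at h1
      omega
    ext j
    induction j using Fin.lastCases with
    | last => omega
    | cast i => exact hcs i
  · exfalso
    have hlt := key_lt hba hsum hpos δ (fun i => (hδ i).le)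
    have hsum2 : (∑ i : Fin n, δ i) + (∑ i : Fin n, c' i.castSucc) =
        ∑ i : Fin n, c i.castSucc := by
      rw [← Finset.sum_add_distrib]
      refine Finset.sum_congr rfl fun i _ => ?_
      have := hge i; simp only [hδdef]; omega
    omega

lemma Amap_inj {a b : Fin n → ℕ} (hba : ∀ i, b i < a i)
    (hsum : (∑ i, (b i : ℚ) / (a i : ℚ)) < 1) {c c' : Fin (n + 1) →₀ ℕ}
    (hd : dsum c = dsum c') (hA : Amap a b c = Amap a b c') : c = c' := by
  rcases le_total (c (Fin.last n)) (c' (Fin.last n)) with h | h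
  · exact Amap_inj_aux hba hsum hd hA h
  · exact (Amap_inj_aux hba hsum hd.symm hA.symm h).symm

def Gen (a b : Fin n → ℕ) (d : ℕ) : Set (Fin n →₀ ℕ) :=
  {v | ∃ e, dsum e = d ∧ v = Amap a b e}

def SGen (a b : Fin n → ℕ) (d : ℕ) : Set (Fin n →₀ ℕ) :=
  (Set.range fun j : Fin n => Finsupp.single j 1) + Gen a b d

variable {K : Type*} [Field K]

lemma monomial_fun {m : ℕ} (g : Fin m → ℕ) :
    (monomial (Finsupp.equivFunOnFinite.symm g) (1 : K)) = ∏ i, X i ^ g i := by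
  rw [monomial_eq, C_1, one_mul, Finsupp.prod_fintype _ _ (fun i => pow_zero _)]
  rfl

lemma span_mon_mul (P Q : Set (Fin n →₀ ℕ)) :
    Ideal.span ((fun s => monomial s (1 : K)) '' P) *
      Ideal.span ((fun s => monomial s (1 : K)) '' Q) =
    Ideal.span ((fun s => monomial s (1 : K)) '' (P + Q)) := by
  rw [Ideal.span_mul_span']
  congr 1
  rw [← Set.image2_mul, Set.image2_image_left, Set.image2_image_right,
    ← Set.image2_add, Set.image_image2]
  apply Set.image2_congr
  intro p _ q _
  rw [monomial_mul, one_mul]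

lemma pow_I (a b : Fin n → ℕ) (d : ℕ) :
    (Ideal.span ((fun s => monomial s (1 : K)) '' Gen a b 1)) ^ d =
      Ideal.span ((fun s => monomial s (1 : K)) '' Gen a b d) := by
  induction d with
  | zero =>
    rw [pow_zero, Ideal.one_eq_top]
    have hg : Gen a b 0 = {0} := by
      ext v
      constructor
      · rintro ⟨e, he, rfl⟩
        have he0 : e = 0 := by
          ext j
          have h1 : e j ≤ dsum e := Finset.single_le_sum
            (fun _ _ => Nat.zero_le _) (Finset.mem_univ j)
          simp only [he] at h1
          simpa using h1
        subst he0
        have : Amap a b 0 = 0 := by ext i; simp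
        simp [this]
      · rintro rfl
        exact ⟨0, by simp [dsum], by ext i; simp⟩
    rw [hg, Set.image_singleton]
    have : (monomial (0 : Fin n →₀ ℕ) (1 : K)) = 1 := by simp
    rw [this, Ideal.span_singleton_one]
  | succ d ih =>
    rw [pow_succ, ih, span_mon_mul]
    have hGG : Gen a b d + Gen a b 1 = Gen a b (d + 1) := by
      ext v
      constructor
      · intro hv
        obtain ⟨x, ⟨e, he, rfl⟩, y, ⟨e', he', rfl⟩, rfl⟩ := Set.mem_add.mp hv
        exact ⟨e + e', by rw [dsum_add, he, he'], (Amap_add a b e e').symm⟩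
      · rintro ⟨e, he, rfl⟩
        have hne : ∃ j, e j ≠ 0 := by
          by_contra h
          push_neg at h
          have h0 : dsum e = 0 := by simp [dsum, h]
          omega
        obtain ⟨j, hj⟩ := hne
        have hsplit : (e - Finsupp.single j 1) + Finsupp.single j 1 = e := by
          ext k
          rcases eq_or_ne k j with rfl | hkj
          · simp [Finsupp.single_apply]
            omega
          · simp [Finsupp.single_apply, Ne.symm hkj]
        refine Set.mem_add.mpr ⟨Amap a b (e - Finsupp.single j 1),
          ⟨e - Finsupp.single j 1, ?_, rfl⟩, Amap a b (Finsupp.single j 1),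
          ⟨Finsupp.single j 1, dsum_single j 1, rfl⟩, ?_⟩
        · have hda := dsum_add (e - Finsupp.single j 1) (Finsupp.single j 1)
          rw [hsplit, dsum_single, he] at hda
          omega
        · rw [← Amap_add, hsplit]
    rw [hGG]

lemma Amap_single_castSucc (a b : Fin n → ℕ) (i : Fin n) :
    Amap a b (Finsupp.single i.castSucc 1) = Finsupp.single i (a i) := by
  ext i'
  rw [Amap_apply]
  have hlast : (Finsupp.single i.castSucc (1 : ℕ)) (Fin.last n) = 0 := by
    rw [Finsupp.single_apply, if_neg (Fin.castSucc_lt_last i).ne]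
  rw [hlast, Nat.mul_zero, Nat.add_zero, Finsupp.single_apply, Finsupp.single_apply]
  rcases eq_or_ne i i' with rfl | hne
  · simp
  · rw [if_neg (fun h => hne (Fin.castSucc_inj.mp h)), if_neg hne, Nat.mul_zero]

lemma Amap_single_last (a b : Fin n → ℕ) :
    Amap a b (Finsupp.single (Fin.last n) 1) = Finsupp.equivFunOnFinite.symm b := by
  ext i
  rw [Amap_apply]
  have h1 : (Finsupp.single (Fin.last n) (1 : ℕ)) i.castSucc = 0 := by
    rw [Finsupp.single_apply, if_neg (Fin.castSucc_lt_last i).ne']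
  rw [h1, Finsupp.single_apply, if_pos rfl]
  simp

lemma mon_castSucc (a b : Fin n → ℕ) (i : Fin n) :
    (monomial (Amap a b (Finsupp.single i.castSucc 1)) (1 : K)) = X i ^ a i := by
  rw [Amap_single_castSucc, X_pow_eq_monomial]

lemma mon_last (a b : Fin n → ℕ) :
    (monomial (Amap a b (Finsupp.single (Fin.last n) 1)) (1 : K)) = ∏ i, X i ^ b i := by
  rw [Amap_single_last, monomial_fun]

lemma I_eq (a b : Fin n → ℕ) :
    Ideal.span (Set.range (fun i => (X i : MvPolynomial (Fin n) K) ^ a i) ∪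
      {∏ i, (X i : MvPolynomial (Fin n) K) ^ b i}) =
    Ideal.span ((fun s => monomial s (1 : K)) '' Gen a b 1) := by
  congr 1
  ext p
  simp only [Set.mem_union, Set.mem_range, Set.mem_singleton_iff, Set.mem_image]
  constructor
  · rintro (⟨i, rfl⟩ | rfl)
    · exact ⟨Amap a b (Finsupp.single i.castSucc 1),
        ⟨Finsupp.single i.castSucc 1, dsum_single _ _, rfl⟩, mon_castSucc a b i⟩
    · exact ⟨Amap a b (Finsupp.single (Fin.last n) 1),
        ⟨Finsupp.single (Fin.last n) 1, dsum_single _ _, rfl⟩, mon_last a b⟩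
  · rintro ⟨v, ⟨e, he, rfl⟩, rfl⟩
    obtain ⟨j, rfl⟩ := dsum_eq_one he
    induction j using Fin.lastCases with
    | last => exact Or.inr (mon_last a b)
    | cast i => exact Or.inl ⟨i, (mon_castSucc a b i).symm⟩

lemma mm_eq :
    Ideal.span (Set.range (X : Fin n → MvPolynomial (Fin n) K)) =
    Ideal.span ((fun s => monomial s (1 : K)) ''
      Set.range (fun j : Fin n => Finsupp.single j 1)) := by
  congr 1
  rw [← Set.range_comp]
  refine congrArg _ (funext fun j => ?_)
  show (X j : MvPolynomial (Fin n) K) = monomial (Finsupp.single j 1) 1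
  rw [← X_pow_eq_monomial, pow_one]

lemma aeval_mon (a b : Fin n → ℕ) (u : Fin (n + 1) → MvPolynomial (Fin n) K)
    (hu : ∀ i : Fin n, u i.castSucc = X i ^ a i)
    (hulast : u (Fin.last n) = ∏ i, X i ^ b i)
    (c : Fin (n + 1) →₀ ℕ) (k : K) :
    aeval u (monomial c k) = monomial (Amap a b c) k := by
  rw [aeval_monomial, Finsupp.prod_fintype _ _ (fun j => pow_zero _)]
  have hRHS : (monomial (Amap a b c) k : MvPolynomial (Fin n) K) =
      C k * ∏ i, X i ^ (a i * c i.castSucc + b i * c (Fin.last n)) := by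
    rw [← monomial_fun (K := K) (fun i => a i * c i.castSucc + b i * c (Fin.last n)),
      C_mul_monomial, mul_one]
    rfl
  rw [hRHS, algebraMap_eq]
  congr 1
  rw [Fin.prod_univ_castSucc]
  simp_rw [hu]
  rw [hulast, ← Finset.prod_pow, ← Finset.prod_mul_distrib]
  refine Finset.prod_congr rfl fun i _ => ?_
  rw [← pow_mul, ← pow_mul, ← pow_add]

lemma mem_J_iff {a b : Fin n → ℕ} (hba : ∀ i, b i < a i)
    (hsum : (∑ i, (b i : ℚ) / (a i : ℚ)) < 1)
    (u : Fin (n + 1) → MvPolynomial (Fin n) K)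
    (hu : ∀ i : Fin n, u i.castSucc = X i ^ a i)
    (hulast : u (Fin.last n) = ∏ i, X i ^ b i)
    (f : MvPolynomial (Fin (n + 1)) K) :
    (∀ d : ℕ, aeval u (homogeneousComponent d f) ∈
        Ideal.span ((fun s => monomial s (1 : K)) '' SGen a b d)) ↔
      ∀ c ∈ f.support, ∃ s ∈ SGen a b (dsum c), s ≤ Amap a b c := by
  have haev : ∀ d : ℕ, aeval u (homogeneousComponent d f) =
      ∑ c ∈ f.support.filter (fun c => dsum c = d),
        monomial (Amap a b c) (coeff c f) := by
    intro d
    rw [homogeneousComponent_apply, map_sum]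
    rw [show (f.support.filter fun c => Finsupp.degree c = d) =
        f.support.filter (fun c => dsum c = d) from
      Finset.filter_congr fun c _ => by rw [degree_eq_dsum]]
    exact Finset.sum_congr rfl fun c _ => aeval_mon a b u hu hulast c _
  constructor
  · intro h c hc
    have h' := h (dsum c)
    rw [haev, mem_ideal_span_monomial_image] at h'
    refine h' (Amap a b c) ?_
    rw [MvPolynomial.mem_support_iff, MvPolynomial.coeff_sum]
    have hcmem : c ∈ f.support.filter (fun c' => dsum c' = dsum c) :=
      Finset.mem_filter.mpr ⟨hc, rfl⟩
    rw [Finset.sum_eq_single_of_mem c hcmem (fun c' hc' hne => by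
      rw [coeff_monomial, if_neg]
      intro hAc
      exact hne (Amap_inj hba hsum ((Finset.mem_filter.mp hc').2) hAc))]
    rw [coeff_monomial, if_pos rfl]
    exact MvPolynomial.mem_support_iff.mp hc
  · intro h d
    rw [haev]
    refine Ideal.sum_mem _ fun c hc => ?_
    obtain ⟨hcs, hcd⟩ := Finset.mem_filter.mp hc
    refine mem_ideal_span_monomial_image.mpr fun m hm => ?_
    have hm' : m = Amap a b c := by
      have h2 := MvPolynomial.support_monomial_subset hm
      rwa [Finset.mem_singleton] at h2
    obtain ⟨s, hs, hle⟩ := h c hcs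
    exact ⟨s, by rwa [hcd] at hs, hm' ▸ hle⟩

lemma mem_span_prod (r : Fin n → ℕ) (f : MvPolynomial (Fin (n + 1)) K) :
    f ∈ Ideal.span {∏ i, (X i.castSucc : MvPolynomial (Fin (n + 1)) K) ^ r i} ↔
      ∀ c ∈ f.support, ∀ i : Fin n, r i ≤ c i.castSucc := by
  have hR : (∏ i, (X i.castSucc : MvPolynomial (Fin (n + 1)) K) ^ r i) =
      monomial (Finsupp.equivFunOnFinite.symm (Fin.snoc r 0)) 1 := by
    rw [monomial_fun, Fin.prod_univ_castSucc]
    simp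
  rw [hR]
  have h2 : ({(monomial (Finsupp.equivFunOnFinite.symm (Fin.snoc r 0)) 1 :
      MvPolynomial (Fin (n + 1)) K)} : Set _) =
      (fun s => monomial s (1 : K)) '' {Finsupp.equivFunOnFinite.symm (Fin.snoc r 0)} := by
    rw [Set.image_singleton]
  rw [h2, mem_ideal_span_monomial_image]
  apply forall₂_congr
  intro c hc
  simp only [Set.mem_singleton_iff, exists_eq_left]
  constructor
  · intro h i
    have h3 := (Finsupp.le_def.mp h) i.castSucc
    simpa using h3
  · intro h
    rw [Finsupp.le_def]
    intro j
    induction j using Fin.lastCases with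
    | last => simp
    | cast i => simpa using h i

lemma core (a b : Fin n → ℕ) (hn : 2 ≤ n) (hba : ∀ i, b i < a i) (hb : ∀ i, 0 < b i)
    (hsum : (∑ i, (b i : ℚ) / (a i : ℚ)) < 1) :
    ∃ r : Fin n → ℕ, (∀ i, 0 < r i) ∧ ∀ c : Fin (n + 1) →₀ ℕ,
      ((∃ s ∈ SGen a b (dsum c), s ≤ Amap a b c) ↔ ∀ i : Fin n, r i ≤ c i.castSucc) := by
  have ha : ∀ i, 0 < a i := fun i => lt_of_le_of_lt (Nat.zero_le _) (hba i)
  have hn0 : 0 < n := by omega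
  have hex : ∃ t, 0 < t ∧ ∑ i, (b i * t) ⌈/⌉ (a i) ≤ t := by
    refine ⟨∏ i, a i, Finset.prod_pos fun i _ => ha i, ?_⟩
    set t := ∏ i, a i with ht
    have htpos : 0 < t := Finset.prod_pos fun i _ => ha i
    have hdvd : ∀ i, a i ∣ t := fun i => Finset.dvd_prod_of_mem _ (Finset.mem_univ i)
    have hc : ∀ i, (b i * t) ⌈/⌉ (a i) ≤ b i * (t / a i) := by
      intro i
      rw [ceilDiv_le_iff_le_mul (ha i), mul_left_comm, Nat.mul_div_cancel' (hdvd i)]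
    have hδ : ∀ i, a i * (b i * (t / a i)) ≤ b i * t := by
      intro i
      rw [mul_left_comm, Nat.mul_div_cancel' (hdvd i)]
    have hlt : (∑ i, b i * (t / a i)) < t := key_lt hba hsum htpos _ hδ
    exact le_trans (Finset.sum_le_sum fun i _ => hc i) hlt.le
  set t0 := Nat.find hex with ht0
  obtain ⟨ht0pos, ht0le⟩ := Nat.find_spec hex
  set r : Fin n → ℕ := fun i => (b i * t0) ⌈/⌉ (a i) with hrdef
  have hr1 : ∀ i, b i * t0 ≤ a i * r i := by
    intro i
    have h1 := le_smul_ceilDiv (ha i) (b := b i * t0)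
    simpa [smul_eq_mul] using h1
  have hrpos : ∀ i, 0 < r i := by
    intro i
    rcases Nat.eq_zero_or_pos (r i) with h0 | h
    · exfalso
      have h1 := hr1 i
      rw [h0, Nat.mul_zero] at h1
      have h2 : 0 < b i * t0 := Nat.mul_pos (hb i) ht0pos
      omega
    · exact h
  have hsumr_le : ∑ i, r i ≤ t0 := ht0le
  have hsumr_ge : t0 ≤ ∑ i, r i := by
    refine Nat.find_min' hex ⟨?_, ?_⟩
    · calc 0 < r ⟨0, hn0⟩ := hrpos _
        _ ≤ ∑ i, r i := Finset.single_le_sum (fun _ _ => Nat.zero_le _) (Finset.mem_univ _)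
    · refine Finset.sum_le_sum fun i _ => ?_
      rw [ceilDiv_le_iff_le_mul (ha i)]
      calc b i * (∑ j, r j) ≤ b i * t0 := Nat.mul_le_mul_left _ hsumr_le
        _ ≤ a i * r i := hr1 i
  have hteq : ∑ i, r i = t0 := le_antisymm hsumr_le hsumr_ge
  have hstrict : ∃ j, b j * t0 < a j * r j := by
    by_contra h
    push_neg at h
    have h1 := key_lt hba hsum ht0pos r h
    omega
  obtain ⟨j, hj⟩ := hstrict
  refine ⟨r, hrpos, fun c => ?_⟩
  constructor
  · rintro ⟨s, hs, hle⟩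
    obtain ⟨x, ⟨j', rfl⟩, y, ⟨e, hde, rfl⟩, rfl⟩ := Set.mem_add.mp hs
    have hpt : ∀ i : Fin n,
        (Finsupp.single j' 1) i + (a i * e i.castSucc + b i * e (Fin.last n)) ≤
          a i * c i.castSucc + b i * c (Fin.last n) := by
      intro i
      have h1 := (Finsupp.le_def.mp hle) i
      simpa [Finsupp.add_apply, Amap_apply] using h1
    set t := e (Fin.last n) with htdef
    set s' := c (Fin.last n) with hs'def
    have hdeg : (∑ i : Fin n, e i.castSucc) + t = (∑ i : Fin n, c i.castSucc) + s' := by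
      have h1 : dsum e = (∑ i : Fin n, e i.castSucc) + t := by
        rw [dsum, Fin.sum_univ_castSucc]
      have h2 : dsum c = (∑ i : Fin n, c i.castSucc) + s' := by
        rw [dsum, Fin.sum_univ_castSucc]
      rw [← h1, ← h2, hde]
    rcases lt_trichotomy t s' with hts | hts | hts
    · exfalso
      set w := s' - t with hwdef
      have hwpos : 0 < w := by omega
      have hδ : ∀ i : Fin n, a i * (e i.castSucc - c i.castSucc) ≤ b i * w := by
        intro i
        have h1 := hpt i
        rcases le_or_gt (e i.castSucc) (c i.castSucc) with h | h
        · rw [Nat.sub_eq_zero_of_le h, Nat.mul_zero]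
          exact Nat.zero_le _
        · obtain ⟨dd, hdd⟩ : ∃ dd, e i.castSucc = c i.castSucc + dd :=
            ⟨_, (Nat.add_sub_cancel' h.le).symm⟩
          rw [hdd, Nat.add_sub_cancel_left]
          rw [hdd, mul_add] at h1
          have hs'2 : s' = t + w := by omega
          rw [hs'2, mul_add] at h1
          linarith [Nat.zero_le ((Finsupp.single j' 1) i)]
      have hlt := key_lt hba hsum hwpos _ hδ
      have hsum2 : (∑ i : Fin n, e i.castSucc) ≤
          (∑ i : Fin n, c i.castSucc) + ∑ i : Fin n, (e i.castSucc - c i.castSucc) := by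
        rw [← Finset.sum_add_distrib]
        exact Finset.sum_le_sum fun i _ => by omega
      omega
    · exfalso
      have hle2 : ∀ i : Fin n, e i.castSucc ≤ c i.castSucc := by
        intro i
        have h1 := hpt i
        rw [← hts] at h1
        have h2 : a i * e i.castSucc ≤ a i * c i.castSucc := by
          linarith [Nat.zero_le ((Finsupp.single j' 1) i)]
        exact Nat.le_of_mul_le_mul_left h2 (ha i)
      have hltj : e j'.castSucc < c j'.castSucc := by
        have h1 := hpt j'
        rw [← hts, Finsupp.single_apply, if_pos rfl] at h1
        have h2 : a j' * e j'.castSucc < a j' * c j'.castSucc := by linarith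
        exact lt_of_mul_lt_mul_left h2 (Nat.zero_le _)
      have h3 : (∑ i : Fin n, e i.castSucc) < ∑ i : Fin n, c i.castSucc :=
        Finset.sum_lt_sum (fun i _ => hle2 i) ⟨j', Finset.mem_univ _, hltj⟩
      omega
    · set w := t - s' with hwdef
      have hwpos : 0 < w := by omega
      have hkey : ∀ i : Fin n, e i.castSucc ≤ c i.castSucc ∧
          b i * w ≤ a i * (c i.castSucc - e i.castSucc) := by
        intro i
        have h1 := hpt i
        have ht2 : t = s' + w := by omega
        rw [ht2, mul_add] at h1
        have h2 : a i * e i.castSucc + b i * w ≤ a i * c i.castSucc := by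
          linarith [Nat.zero_le ((Finsupp.single j' 1) i)]
        have h3 : e i.castSucc ≤ c i.castSucc :=
          Nat.le_of_mul_le_mul_left (by linarith [Nat.zero_le (b i * w)]) (ha i)
        obtain ⟨dd, hdd⟩ : ∃ dd, c i.castSucc = e i.castSucc + dd :=
          ⟨_, (Nat.add_sub_cancel' h3).symm⟩
        refine ⟨h3, ?_⟩
        rw [hdd, Nat.add_sub_cancel_left]
        rw [hdd, mul_add] at h2
        linarith
      have hsum3 : (∑ i : Fin n, (c i.castSucc - e i.castSucc)) = w := by
        have h4 : (∑ i : Fin n, e i.castSucc) +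
            (∑ i : Fin n, (c i.castSucc - e i.castSucc)) = ∑ i : Fin n, c i.castSucc := by
          rw [← Finset.sum_add_distrib]
          exact Finset.sum_congr rfl fun i _ => by have := (hkey i).1; omega
        omega
      have hwpred : 0 < w ∧ ∑ i, (b i * w) ⌈/⌉ (a i) ≤ w := by
        refine ⟨hwpos, ?_⟩
        refine le_trans (Finset.sum_le_sum fun i _ => ?_) hsum3.le
        rw [ceilDiv_le_iff_le_mul (ha i)]
        exact (hkey i).2
      have ht0w : t0 ≤ w := Nat.find_min' hex hwpred
      intro i
      calc r i ≤ (b i * w) ⌈/⌉ (a i) := by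
            rw [hrdef, ceilDiv_le_iff_le_mul (ha i)]
            calc b i * t0 ≤ b i * w := Nat.mul_le_mul_left _ ht0w
              _ ≤ a i * ((b i * w) ⌈/⌉ (a i)) := by
                have h1 := le_smul_ceilDiv (ha i) (b := b i * w)
                simpa [smul_eq_mul] using h1
        _ ≤ c i.castSucc - e i.castSucc := by
            rw [ceilDiv_le_iff_le_mul (ha i)]
            exact (hkey i).2
        _ ≤ c i.castSucc := Nat.sub_le _ _
  · intro hrc
    set e : Fin (n + 1) →₀ ℕ := Finsupp.equivFunOnFinite.symm
        (Fin.snoc (fun i => c i.castSucc - r i) (c (Fin.last n) + t0)) with hedef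
    have he_cast : ∀ i : Fin n, e i.castSucc = c i.castSucc - r i := by
      intro i
      simp [hedef]
    have he_last : e (Fin.last n) = c (Fin.last n) + t0 := by
      simp [hedef]
    have hdeg : dsum e = dsum c := by
      rw [dsum, dsum, Fin.sum_univ_castSucc, Fin.sum_univ_castSucc, he_last]
      simp_rw [he_cast]
      have h4 : (∑ i : Fin n, (c i.castSucc - r i)) + (∑ i : Fin n, r i) =
          ∑ i : Fin n, c i.castSucc := by
        rw [← Finset.sum_add_distrib]
        exact Finset.sum_congr rfl fun i _ => by have := hrc i; omega
      omega
    refine ⟨Finsupp.single j 1 + Amap a b e,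
      Set.add_mem_add ⟨j, rfl⟩ ⟨e, hdeg, rfl⟩, ?_⟩
    rw [Finsupp.le_def]
    intro i
    rw [Finsupp.add_apply, Amap_apply, Amap_apply, he_cast, he_last]
    obtain ⟨dd, hdd⟩ : ∃ dd, c i.castSucc = r i + dd :=
      ⟨_, (Nat.add_sub_cancel' (hrc i)).symm⟩
    rw [hdd, Nat.add_sub_cancel_left, mul_add, mul_add]
    rcases eq_or_ne j i with rfl | hne
    · rw [Finsupp.single_apply, if_pos rfl]
      linarith [hj]
    · rw [Finsupp.single_apply, if_neg hne]
      linarith [hr1 i]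

end Stmt3Aux

open Stmt3Aux
theorem stmt_3 {K : Type*} [Field K] (n : ℕ) (hn : 2 ≤ n)
    (a b : Fin n → ℕ) (hba : ∀ i, b i < a i) (hb : ∀ i, 0 < b i)
    (I mm : Ideal (MvPolynomial (Fin n) K))
    (hI : I = Ideal.span (Set.range (fun i => (X i : MvPolynomial (Fin n) K) ^ a i) ∪
      {∏ i, (X i : MvPolynomial (Fin n) K) ^ b i}))
    (hmm : mm = Ideal.span (Set.range (X : Fin n → MvPolynomial (Fin n) K)))
    (u : Fin (n + 1) → MvPolynomial (Fin n) K)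
    (hu : ∀ i : Fin n, u i.castSucc = X i ^ a i)
    (hulast : u (Fin.last n) = ∏ i, X i ^ b i)
    (J : Ideal (MvPolynomial (Fin (n + 1)) K))
    (hJ : ∀ f : MvPolynomial (Fin (n + 1)) K,
      f ∈ J ↔ ∀ d : ℕ, aeval u (homogeneousComponent d f) ∈ mm * I ^ d)
    (hsum : (∑ i, (b i : ℚ) / (a i : ℚ)) < 1) :
    ∃ r : Fin n → ℕ, (∀ i, 0 < r i) ∧
      J = Ideal.span {∏ i, (X i.castSucc : MvPolynomial (Fin (n + 1)) K) ^ r i} := by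
  obtain ⟨r, hrpos, hcore⟩ := core a b hn hba hb hsum
  refine ⟨r, hrpos, ?_⟩
  have hmmIeq : ∀ d : ℕ, mm * I ^ d =
      Ideal.span ((fun s => monomial s (1 : K)) '' SGen a b d) := by
    intro d
    rw [hI, I_eq, pow_I, hmm, mm_eq, span_mon_mul]
    rfl
  ext f
  rw [hJ f, mem_span_prod]
  have h1 : (∀ d : ℕ, aeval u (homogeneousComponent d f) ∈ mm * I ^ d) ↔
      ∀ c ∈ f.support, ∃ s ∈ SGen a b (dsum c), s ≤ Amap a b c := by
    constructor
    · intro h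
      exact (mem_J_iff hba hsum u hu hulast f).mp fun d => by
        rw [← hmmIeq d]; exact h d
    · intro h d
      rw [hmmIeq d]
      exact (mem_J_iff hba hsum u hu hulast f).mpr h d
  rw [h1]
  exact forall₂_congr fun c _ => hcore c
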